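/- arXiv:1305.5673 — 2 statements merged into one kernel-verified Lean document; each statement's English description precedes it below -/
import Mathlib

section
/- Let z > 0 and n > 0, let f : [-1/2,1/2] → ℝ be nondecreasing, and for integers j ≥ 2 define ξ_j = 2^{j-1}( ∫_{2^{-j}}^{2^{-j+1}} f(t) dt − ∫_{-2^{-j+1}}^{-2^{-j}} f(t) dt ) and σ_j = (2^{j-1}/n)^{1/2}. Then there exists a smallest integer j* ≥ 2 with ξ_{j*} ≤ z σ_{j*}, and for this j* there exists a nondecreasing function g on [-1/2,1/2] with ∫_{-1/2}^{1/2} (f(t) − g(t))² dt ≤ z²/n and |g(0) − f(0)| ≥ (1/√2) z σ_{j*}. In particular ω(z/√n, f, F_m) ≥ (1/√2) z σ_{j*}. -/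
open MeasureTheory

namespace CLX3
section
open MeasureTheory Set intervalIntegral


/-- a.e. equality on `uIoc` from equality off a single point. -/
lemma ae_offpoint {h1 h2 : ℝ → ℝ} {a b p : ℝ}
    (h : ∀ x ∈ Set.uIoc a b, x ≠ p → h1 x = h2 x) :
    ∀ᵐ x ∂(volume : Measure ℝ), x ∈ Set.uIoc a b → h1 x = h2 x := by
  rw [MeasureTheory.ae_iff]
  refine measure_mono_null (fun x hx => ?_) (Real.volume_singleton (a := p))
  simp only [Set.mem_setOf_eq, _root_.not_imp] at hx
  by_contra hxp
  exact hx.2 (h x hx.1 hxp)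

lemma integral_offpoint {h1 h2 : ℝ → ℝ} {a b p : ℝ}
    (h : ∀ x ∈ Set.uIoc a b, x ≠ p → h1 x = h2 x) :
    ∫ t in a..b, h1 t = ∫ t in a..b, h2 t :=
  intervalIntegral.integral_congr_ae (ae_offpoint h)

lemma intervalIntegrable_offpoint {h1 h2 : ℝ → ℝ} {a b p : ℝ}
    (hi : IntervalIntegrable h2 volume a b)
    (h : ∀ x ∈ Set.uIoc a b, x ≠ p → h1 x = h2 x) :
    IntervalIntegrable h1 volume a b := by
  rw [intervalIntegrable_iff] at hi ⊢
  refine hi.congr ?_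
  have : ∀ᵐ x ∂(volume : Measure ℝ).restrict (Set.uIoc a b), h1 x = h2 x :=
    (ae_restrict_iff' measurableSet_uIoc).2 (ae_offpoint h)
  exact Filter.EventuallyEq.symm this

lemma uIoc_subset_II {a b : ℝ} (ha : a ∈ Set.Icc (-(1:ℝ)/2) (1/2))
    (hb : b ∈ Set.Icc (-(1:ℝ)/2) (1/2)) :
    Set.uIoc a b ⊆ Set.Icc (-(1:ℝ)/2) (1/2) := by
  intro x hx
  rcases Set.mem_uIoc.1 hx with ⟨h1, h2⟩ | ⟨h1, h2⟩ <;>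
    exact ⟨by linarith [ha.1, hb.1], by linarith [ha.2, hb.2]⟩

lemma uIcc_subset_II {a b : ℝ} (ha : a ∈ Set.Icc (-(1:ℝ)/2) (1/2))
    (hb : b ∈ Set.Icc (-(1:ℝ)/2) (1/2)) :
    Set.uIcc a b ⊆ Set.Icc (-(1:ℝ)/2) (1/2) := by
  intro x hx
  rcases Set.mem_uIcc.1 hx with ⟨h1, h2⟩ | ⟨h1, h2⟩ <;>
    exact ⟨by linarith [ha.1, hb.1], by linarith [ha.2, hb.2]⟩

/-- The square of a difference of functions monotone on `[-1/2,1/2]` is interval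
integrable on subintervals. -/
lemma sqInt {f g : ℝ → ℝ} (hf : MonotoneOn f (Set.Icc (-(1:ℝ)/2) (1/2)))
    (hg : MonotoneOn g (Set.Icc (-(1:ℝ)/2) (1/2))) {a b : ℝ}
    (ha : a ∈ Set.Icc (-(1:ℝ)/2) (1/2)) (hb : b ∈ Set.Icc (-(1:ℝ)/2) (1/2)) :
    IntervalIntegrable (fun t => (g t - f t)^2) volume a b := by
  have hsub := uIoc_subset_II ha hb
  rw [intervalIntegrable_iff]
  have hmf : AEMeasurable f (volume.restrict (Set.uIoc a b)) :=
    aemeasurable_restrict_of_monotoneOn measurableSet_uIoc (hf.mono hsub)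
  have hmg : AEMeasurable g (volume.restrict (Set.uIoc a b)) :=
    aemeasurable_restrict_of_monotoneOn measurableSet_uIoc (hg.mono hsub)
  have hlm : (-(1:ℝ)/2) ∈ Set.Icc (-(1:ℝ)/2) (1/2) := by constructor <;> norm_num
  have hrm : ((1:ℝ)/2) ∈ Set.Icc (-(1:ℝ)/2) (1/2) := by constructor <;> norm_num
  set M : ℝ := (|f (-(1:ℝ)/2)| + |f (1/2)| + |g (-(1:ℝ)/2)| + |g (1/2)|)^2 with hM
  refine Integrable.mono' (g := fun _ => M)
    ((integrableOn_const_iff).2 (Or.inr ?_)) ((hmg.sub hmf).pow_const 2).aestronglyMeasurable ?_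
  · rw [Set.uIoc]
    exact measure_Ioc_lt_top
  · refine (ae_restrict_iff' measurableSet_uIoc).2 (Filter.Eventually.of_forall fun x hx => ?_)
    have hxm := hsub hx
    have hfl := hf hlm hxm hxm.1
    have hfr := hf hxm hrm hxm.2
    have hgl := hg hlm hxm hxm.1
    have hgr := hg hxm hrm hxm.2
    have h1 : |g x - f x| ≤ |f (-(1:ℝ)/2)| + |f (1/2)| + |g (-(1:ℝ)/2)| + |g (1/2)| := by
      rw [abs_le]
      constructor <;> cases abs_cases (f (-(1:ℝ)/2)) <;> cases abs_cases (f (1/2)) <;>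
        cases abs_cases (g (-(1:ℝ)/2)) <;> cases abs_cases (g (1/2)) <;> linarith
    have : ‖(g x - f x)^2‖ = |g x - f x|^2 := by
      rw [Real.norm_eq_abs, abs_of_nonneg (sq_nonneg _), sq_abs]
    rw [this, hM]
    exact pow_le_pow_left₀ (abs_nonneg _) h1 2

lemma markov_hi {f : ℝ → ℝ} {a b K : ℝ} (hab : a ≤ b)
    (hi : IntervalIntegrable f volume a b)
    (h : K * (b - a) < ∫ t in a..b, f t) : ∃ t ∈ Set.Ico a b, K < f t := by
  by_contra hc
  push_neg at hc
  have hae : ∀ᵐ x ∂(volume : Measure ℝ).restrict (Set.Icc a b), f x ≤ K := by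
    refine (ae_restrict_iff' measurableSet_Icc).2 ?_
    rw [MeasureTheory.ae_iff]
    refine measure_mono_null (fun x hx => ?_) (Real.volume_singleton (a := b))
    simp only [Set.mem_setOf_eq, _root_.not_imp, not_le] at hx
    have hxb : x = b := by
      by_contra hne
      exact absurd (hc x ⟨hx.1.1, lt_of_le_of_ne hx.1.2 hne⟩) (not_le.2 hx.2)
    simp [hxb]
  have := intervalIntegral.integral_mono_ae_restrict hab hi
    (_root_.intervalIntegrable_const (c := K)) hae
  rw [intervalIntegral.integral_const, smul_eq_mul] at this
  nlinarith [this]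

lemma markov_lo {f : ℝ → ℝ} {a b K : ℝ} (hab : a ≤ b)
    (hi : IntervalIntegrable f volume a b)
    (h : (∫ t in a..b, f t) < K * (b - a)) : ∃ t ∈ Set.Ioc a b, f t < K := by
  by_contra hc
  push_neg at hc
  have hae : ∀ᵐ x ∂(volume : Measure ℝ).restrict (Set.Icc a b), K ≤ f x := by
    refine (ae_restrict_iff' measurableSet_Icc).2 ?_
    rw [MeasureTheory.ae_iff]
    refine measure_mono_null (fun x hx => ?_) (Real.volume_singleton (a := a))
    simp only [Set.mem_setOf_eq, _root_.not_imp, not_le] at hx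
    have hxa : x = a := by
      by_contra hne
      exact absurd (hc x ⟨lt_of_le_of_ne hx.1.1 (Ne.symm hne), hx.1.2⟩) (not_le.2 hx.2)
    simp [hxa]
  have := intervalIntegral.integral_mono_ae_restrict hab
    (_root_.intervalIntegrable_const (c := K)) hi hae
  rw [intervalIntegral.integral_const, smul_eq_mul] at this
  nlinarith [this]

lemma int_le_const {f : ℝ → ℝ} {a b C : ℝ} (hab : a ≤ b)
    (hi : IntervalIntegrable f volume a b)
    (h : ∀ x ∈ Set.Icc a b, f x ≤ C) : (∫ t in a..b, f t) ≤ (b - a) * C := by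
  have := intervalIntegral.integral_mono_on hab hi (_root_.intervalIntegrable_const (c := C)) h
  rwa [intervalIntegral.integral_const, smul_eq_mul] at this

lemma const_le_int {f : ℝ → ℝ} {a b C : ℝ} (hab : a ≤ b)
    (hi : IntervalIntegrable f volume a b)
    (h : ∀ x ∈ Set.Icc a b, C ≤ f x) : (b - a) * C ≤ ∫ t in a..b, f t := by
  have := intervalIntegral.integral_mono_on hab (_root_.intervalIntegrable_const (c := C)) hi h
  rwa [intervalIntegral.integral_const, smul_eq_mul] at this

variable {f : ℝ → ℝ}

/-- Right-sided perturbation. -/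
lemma constrR {f : ℝ → ℝ} (hf : MonotoneOn f (Set.Icc (-(1:ℝ)/2) (1/2))) {c t0 : ℝ} (hc : 0 ≤ c)
    (h0 : 0 < t0) (h1 : t0 ≤ 1/2)
    (hbig : ∀ t, t0 < t → t ≤ 1/2 → f 0 + c ≤ f t) :
    ∃ g : ℝ → ℝ, MonotoneOn g (Set.Icc (-(1:ℝ)/2) (1/2)) ∧
      (∫ t in (-(1:ℝ)/2)..(1/2), (f t - g t)^2) ≤ c^2 * t0 ∧ |g 0 - f 0| = c := by
  set K := f 0 + c with hK
  set g : ℝ → ℝ := fun t => if t < 0 then f t else max (f t) K with hg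
  have hlm : (-(1:ℝ)/2) ∈ Set.Icc (-(1:ℝ)/2) (1/2) := by constructor <;> norm_num
  have hrm : ((1:ℝ)/2) ∈ Set.Icc (-(1:ℝ)/2) (1/2) := by constructor <;> norm_num
  have h0m : (0:ℝ) ∈ Set.Icc (-(1:ℝ)/2) (1/2) := by constructor <;> norm_num
  have ht0m : t0 ∈ Set.Icc (-(1:ℝ)/2) (1/2) := ⟨by linarith, h1⟩
  -- the auxiliary antitone function
  set φ : ℝ → ℝ := fun t => (max (K - f t) 0)^2 with hφ
  have hφanti : AntitoneOn φ (Set.Icc (-(1:ℝ)/2) (1/2)) := by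
    intro s hs t ht hst
    have := hf hs ht hst
    exact pow_le_pow_left₀ (le_max_right _ _) (max_le_max (by linarith) le_rfl) 2
  have hgmono : MonotoneOn g (Set.Icc (-(1:ℝ)/2) (1/2)) := by
    intro s hs t ht hst
    have hfst := hf hs ht hst
    simp only [hg]
    split_ifs with h1' h2' h2'
    · exact hfst
    · exact hfst.trans (le_max_left _ _)
    · linarith
    · exact max_le_max hfst le_rfl
  refine ⟨g, hgmono, ?_, ?_⟩
  · -- the integral bound
    have heq1 : ∀ x ∈ Set.uIoc (-(1:ℝ)/2) (0:ℝ), x ≠ 0 → (f x - g x)^2 = (fun _ => (0:ℝ)) x := by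
      intro x hx hxne
      rw [Set.uIoc_of_le (by norm_num)] at hx
      have hxlt : x < 0 := lt_of_le_of_ne hx.2 hxne
      simp [hg, if_pos hxlt]
    have heq2 : ∀ x ∈ Set.uIoc (0:ℝ) t0, x ≠ 37 → (f x - g x)^2 = φ x := by
      intro x hx _
      rw [Set.uIoc_of_le h0.le] at hx
      have : ¬ x < 0 := by linarith [hx.1]
      simp only [hg, if_neg this, hφ]
      rcases le_total (f x) K with hle | hle
      · rw [max_eq_right hle, max_eq_left (by linarith)]; ring
      · rw [max_eq_left hle, max_eq_right (by linarith)]; ring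
    have heq3 : ∀ x ∈ Set.uIoc t0 ((1:ℝ)/2), x ≠ 37 → (f x - g x)^2 = (fun _ => (0:ℝ)) x := by
      intro x hx _
      rw [Set.uIoc_of_le h1] at hx
      have hxpos : ¬ x < 0 := by linarith [hx.1]
      have : K ≤ f x := hbig x hx.1 hx.2
      simp [hg, if_neg hxpos, max_eq_left this]
    have hφint : IntervalIntegrable φ volume 0 t0 :=
      (hφanti.mono (uIcc_subset_II h0m ht0m)).intervalIntegrable
    have II1 : IntervalIntegrable (fun t => (f t - g t)^2) volume (-(1:ℝ)/2) 0 :=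
      intervalIntegrable_offpoint (_root_.intervalIntegrable_const (c := (0:ℝ))) heq1
    have II2 : IntervalIntegrable (fun t => (f t - g t)^2) volume 0 t0 :=
      intervalIntegrable_offpoint hφint heq2
    have II3 : IntervalIntegrable (fun t => (f t - g t)^2) volume t0 (1/2) :=
      intervalIntegrable_offpoint (_root_.intervalIntegrable_const (c := (0:ℝ))) heq3
    have hs1 := intervalIntegral.integral_add_adjacent_intervals II2 II3
    have hs2 := intervalIntegral.integral_add_adjacent_intervals II1 (II2.trans II3)
    have e1 : (∫ t in (-(1:ℝ)/2)..(0:ℝ), (f t - g t)^2) = 0 := by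
      rw [integral_offpoint heq1]; simp
    have e3 : (∫ t in t0..((1:ℝ)/2), (f t - g t)^2) = 0 := by
      rw [integral_offpoint heq3]; simp
    have e2 : (∫ t in (0:ℝ)..t0, (f t - g t)^2) ≤ c^2 * t0 := by
      rw [integral_offpoint heq2]
      have hb : ∀ x ∈ Set.Icc (0:ℝ) t0, φ x ≤ c^2 := by
        intro x hx
        have hxm : x ∈ Set.Icc (-(1:ℝ)/2) (1/2) := ⟨by linarith [hx.1], le_trans hx.2 h1⟩
        have : f 0 ≤ f x := hf h0m hxm hx.1
        exact pow_le_pow_left₀ (le_max_right _ _) (max_le (by simp [hK]; linarith) hc) 2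
      have := int_le_const h0.le hφint hb
      calc (∫ t in (0:ℝ)..t0, φ t) ≤ (t0 - 0) * c^2 := this
        _ = c^2 * t0 := by ring
    calc (∫ t in (-(1:ℝ)/2)..(1/2), (f t - g t)^2)
        = (∫ t in (-(1:ℝ)/2)..(0:ℝ), (f t - g t)^2) + ((∫ t in (0:ℝ)..t0, (f t - g t)^2)
            + (∫ t in t0..((1:ℝ)/2), (f t - g t)^2)) := by rw [hs1, hs2]
      _ ≤ 0 + (c^2 * t0 + 0) := by rw [e1, e3]; linarith
      _ = c^2 * t0 := by ring
  · have : g 0 = K := by simp [hg, max_eq_right (by simp [hK]; linarith : f 0 ≤ K)]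
    rw [this, hK]
    simp [abs_of_nonneg hc]


/-- Left-sided perturbation. -/
lemma constrL {f : ℝ → ℝ} (hf : MonotoneOn f (Set.Icc (-(1:ℝ)/2) (1/2))) {c t0 : ℝ} (hc : 0 ≤ c)
    (h0 : t0 < 0) (h1 : -(1:ℝ)/2 ≤ t0)
    (hsmall : ∀ t, -(1:ℝ)/2 ≤ t → t ≤ t0 → f t ≤ f 0 - c) :
    ∃ g : ℝ → ℝ, MonotoneOn g (Set.Icc (-(1:ℝ)/2) (1/2)) ∧
      (∫ t in (-(1:ℝ)/2)..(1/2), (f t - g t)^2) ≤ c^2 * (-t0) ∧ |g 0 - f 0| = c := by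
  set K := f 0 - c with hK
  set g : ℝ → ℝ := fun t => if t ≤ 0 then min (f t) K else f t with hg
  have hlm : (-(1:ℝ)/2) ∈ Set.Icc (-(1:ℝ)/2) (1/2) := by constructor <;> norm_num
  have hrm : ((1:ℝ)/2) ∈ Set.Icc (-(1:ℝ)/2) (1/2) := by constructor <;> norm_num
  have h0m : (0:ℝ) ∈ Set.Icc (-(1:ℝ)/2) (1/2) := by constructor <;> norm_num
  have ht0m : t0 ∈ Set.Icc (-(1:ℝ)/2) (1/2) := ⟨h1, by linarith⟩
  set φ : ℝ → ℝ := fun t => (max (f t - K) 0)^2 with hφ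
  have hφmono : MonotoneOn φ (Set.Icc (-(1:ℝ)/2) (1/2)) := by
    intro s hs t ht hst
    have := hf hs ht hst
    exact pow_le_pow_left₀ (le_max_right _ _) (max_le_max (by linarith) le_rfl) 2
  have hgmono : MonotoneOn g (Set.Icc (-(1:ℝ)/2) (1/2)) := by
    intro s hs t ht hst
    have hfst := hf hs ht hst
    simp only [hg]
    split_ifs with h1' h2' h2'
    · exact min_le_min hfst le_rfl
    · exact (min_le_left _ _).trans hfst
    · linarith
    · exact hfst
  refine ⟨g, hgmono, ?_, ?_⟩
  · have heq1 : ∀ x ∈ Set.uIoc (-(1:ℝ)/2) t0, x ≠ 37 → (f x - g x)^2 = (fun _ => (0:ℝ)) x := by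
      intro x hx _
      rw [Set.uIoc_of_le h1] at hx
      have hxle : x ≤ 0 := by linarith [hx.2]
      have : f x ≤ K := hsmall x (by linarith [hx.1]) hx.2
      simp [hg, if_pos hxle, min_eq_left this]
    have heq2 : ∀ x ∈ Set.uIoc t0 (0:ℝ), x ≠ 37 → (f x - g x)^2 = φ x := by
      intro x hx _
      rw [Set.uIoc_of_le h0.le] at hx
      simp only [hg, if_pos hx.2, hφ]
      rcases le_total (f x) K with hle | hle
      · rw [min_eq_left hle, max_eq_right (by linarith)]; ring
      · rw [min_eq_right hle, max_eq_left (by linarith)]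
    have heq3 : ∀ x ∈ Set.uIoc (0:ℝ) ((1:ℝ)/2), x ≠ 37 → (f x - g x)^2 = (fun _ => (0:ℝ)) x := by
      intro x hx _
      rw [Set.uIoc_of_le (by norm_num)] at hx
      have : ¬ x ≤ 0 := by linarith [hx.1]
      simp [hg, if_neg this]
    have hφint : IntervalIntegrable φ volume t0 0 :=
      (hφmono.mono (uIcc_subset_II ht0m h0m)).intervalIntegrable
    have II1 : IntervalIntegrable (fun t => (f t - g t)^2) volume (-(1:ℝ)/2) t0 :=
      intervalIntegrable_offpoint (_root_.intervalIntegrable_const (c := (0:ℝ))) heq1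
    have II2 : IntervalIntegrable (fun t => (f t - g t)^2) volume t0 0 :=
      intervalIntegrable_offpoint hφint heq2
    have II3 : IntervalIntegrable (fun t => (f t - g t)^2) volume 0 (1/2) :=
      intervalIntegrable_offpoint (_root_.intervalIntegrable_const (c := (0:ℝ))) heq3
    have hs1 := intervalIntegral.integral_add_adjacent_intervals II1 II2
    have hs2 := intervalIntegral.integral_add_adjacent_intervals (II1.trans II2) II3
    have e1 : (∫ t in (-(1:ℝ)/2)..t0, (f t - g t)^2) = 0 := by
      rw [integral_offpoint heq1]; simp
    have e3 : (∫ t in (0:ℝ)..((1:ℝ)/2), (f t - g t)^2) = 0 := by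
      rw [integral_offpoint heq3]; simp
    have e2 : (∫ t in t0..(0:ℝ), (f t - g t)^2) ≤ c^2 * (-t0) := by
      rw [integral_offpoint heq2]
      have hb : ∀ x ∈ Set.Icc t0 (0:ℝ), φ x ≤ c^2 := by
        intro x hx
        have hxm : x ∈ Set.Icc (-(1:ℝ)/2) (1/2) := ⟨by linarith [hx.1], by linarith [hx.2]⟩
        have : f x ≤ f 0 := hf hxm h0m hx.2
        exact pow_le_pow_left₀ (le_max_right _ _) (max_le (by simp [hK]; linarith) hc) 2
      have := int_le_const h0.le hφint hb
      calc (∫ t in t0..(0:ℝ), φ t) ≤ (0 - t0) * c^2 := this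
        _ = c^2 * (-t0) := by ring
    calc (∫ t in (-(1:ℝ)/2)..(1/2), (f t - g t)^2)
        = ((∫ t in (-(1:ℝ)/2)..t0, (f t - g t)^2) + (∫ t in t0..(0:ℝ), (f t - g t)^2))
            + (∫ t in (0:ℝ)..((1:ℝ)/2), (f t - g t)^2) := by rw [hs1, hs2]
      _ ≤ (0 + c^2 * (-t0)) + 0 := by rw [e1, e3]; linarith
      _ = c^2 * (-t0) := by ring
  · have : g 0 = K := by simp [hg, min_eq_right (by simp [hK]; linarith : K ≤ f 0)]
    rw [this]
    have h2 : K - f 0 = -c := by rw [hK]; ring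
    rw [h2, abs_neg, abs_of_nonneg hc]


/-- The defining set of the modulus is bounded above. -/
lemma bddAboveS {f : ℝ → ℝ} (hf : MonotoneOn f (Set.Icc (-(1:ℝ)/2) (1/2))) (ε : ℝ) :
    BddAbove {d : ℝ | ∃ g : ℝ → ℝ, MonotoneOn g (Set.Icc (-(1:ℝ)/2) (1/2)) ∧
      (∫ t in (-(1:ℝ)/2)..(1/2), (g t - f t)^2) ≤ ε^2 ∧ d = |g 0 - f 0|} := by
  have hlm : (-(1:ℝ)/2) ∈ Set.Icc (-(1:ℝ)/2) (1/2) := by constructor <;> norm_num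
  have hrm : ((1:ℝ)/2) ∈ Set.Icc (-(1:ℝ)/2) (1/2) := by constructor <;> norm_num
  have h0m : (0:ℝ) ∈ Set.Icc (-(1:ℝ)/2) (1/2) := by constructor <;> norm_num
  refine ⟨(f (1/2) - f (-(1:ℝ)/2)) + 2*|ε|, ?_⟩
  rintro d ⟨g, hg, hint, rfl⟩
  have hIf := sqInt hf hg hlm hrm
  have hmono0 : f (-(1:ℝ)/2) ≤ f 0 := hf hlm h0m (by norm_num)
  have hmono1 : f 0 ≤ f (1/2) := hf h0m hrm (by norm_num)
  rw [abs_sub_le_iff]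
  constructor
  · -- g 0 - f 0 ≤ bound
    by_contra hcon
    push_neg at hcon
    obtain ⟨u, hu⟩ : ∃ u : ℝ, u = g 0 - f (1/2) := ⟨_, rfl⟩
    have hu2 : 2*|ε| < u := by simp only [hu]; linarith
    have hu0 : 0 ≤ u := le_trans (by positivity) hu2.le
    set ψ : ℝ → ℝ := fun t => if t < 0 then 0 else u^2 with hψ
    have hψmono : Monotone ψ := by
      intro s t hst
      simp only [hψ]
      split_ifs with hs' ht'
      · exact le_rfl
      · exact sq_nonneg u
      · linarith
      · exact le_rfl
    have hψint : ∀ a b : ℝ, IntervalIntegrable ψ volume a b :=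
      fun a b => hψmono.intervalIntegrable
    have hle : ∀ x ∈ Set.Icc (-(1:ℝ)/2) (1/2), ψ x ≤ (g x - f x)^2 := by
      intro x hx
      simp only [hψ]
      split_ifs with hx'
      · exact sq_nonneg _
      · push_neg at hx'
        have h1 : g 0 ≤ g x := hg h0m hx hx'
        have h2 : f x ≤ f (1/2) := hf hx hrm hx.2
        have : u ≤ g x - f x := by simp only [hu]; linarith
        exact pow_le_pow_left₀ hu0 this 2
    have hcomp : (∫ t in (-(1:ℝ)/2)..(1/2), ψ t) ≤ ∫ t in (-(1:ℝ)/2)..(1/2), (g t - f t)^2 :=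
      intervalIntegral.integral_mono_on (by norm_num) (hψint _ _) hIf hle
    have hψval : (∫ t in (-(1:ℝ)/2)..(1/2), ψ t) = u^2 * (1/2) := by
      have e1 : (∫ t in (-(1:ℝ)/2)..(0:ℝ), ψ t) = 0 := by
        have : ∀ x ∈ Set.uIoc (-(1:ℝ)/2) (0:ℝ), x ≠ 0 → ψ x = (fun _ => (0:ℝ)) x := by
          intro x hx hxne
          rw [Set.uIoc_of_le (by norm_num)] at hx
          simp [hψ, if_pos (lt_of_le_of_ne hx.2 hxne)]
        rw [integral_offpoint this]; simp
      have e2 : (∫ t in (0:ℝ)..((1:ℝ)/2), ψ t) = u^2 * (1/2) := by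
        have : ∀ x ∈ Set.uIoc (0:ℝ) ((1:ℝ)/2), x ≠ 37 → ψ x = (fun _ => u^2) x := by
          intro x hx _
          rw [Set.uIoc_of_le (by norm_num)] at hx
          simp [hψ, not_lt.2 (le_of_lt hx.1)]
        rw [integral_offpoint this, intervalIntegral.integral_const, smul_eq_mul]
        ring
      have := intervalIntegral.integral_add_adjacent_intervals (hψint (-(1:ℝ)/2) 0)
        (hψint 0 (1/2))
      rw [← this, e1, e2]; ring
    have h4 : (2*|ε|)^2 < u^2 := by
      have := pow_lt_pow_left₀ hu2 (by positivity : (0:ℝ) ≤ 2*|ε|) (by norm_num : 2 ≠ 0)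
      exact this
    have h5 : (2*|ε|)^2 = 4*ε^2 := by rw [mul_pow, sq_abs]; ring
    have hA : u^2 * (1/2) ≤ ε^2 := by rw [← hψval]; exact hcomp.trans hint
    rw [h5] at h4
    have hz := sq_nonneg ε
    linarith [hA, h4, hz]
  · -- f 0 - g 0 ≤ bound
    by_contra hcon
    push_neg at hcon
    obtain ⟨u, hu⟩ : ∃ u : ℝ, u = f (-(1:ℝ)/2) - g 0 := ⟨_, rfl⟩
    have hu2 : 2*|ε| < u := by simp only [hu]; linarith
    have hu0 : 0 ≤ u := le_trans (by positivity) hu2.le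
    set ψ : ℝ → ℝ := fun t => if t ≤ 0 then u^2 else 0 with hψ
    have hψanti : Antitone ψ := by
      intro s t hst
      simp only [hψ]
      split_ifs with hs' ht'
      · exact le_rfl
      · linarith
      · exact sq_nonneg u
      · exact le_rfl
    have hψint : ∀ a b : ℝ, IntervalIntegrable ψ volume a b :=
      fun a b => hψanti.intervalIntegrable
    have hle : ∀ x ∈ Set.Icc (-(1:ℝ)/2) (1/2), ψ x ≤ (g x - f x)^2 := by
      intro x hx
      simp only [hψ]
      split_ifs with hx'
      · have h1 : g x ≤ g 0 := hg hx h0m hx'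
        have h2 : f (-(1:ℝ)/2) ≤ f x := hf hlm hx hx.1
        have h3 : u ≤ f x - g x := by simp only [hu]; linarith
        have := pow_le_pow_left₀ hu0 h3 2
        calc u^2 ≤ (f x - g x)^2 := this
          _ = (g x - f x)^2 := by ring
      · exact sq_nonneg _
    have hcomp : (∫ t in (-(1:ℝ)/2)..(1/2), ψ t) ≤ ∫ t in (-(1:ℝ)/2)..(1/2), (g t - f t)^2 :=
      intervalIntegral.integral_mono_on (by norm_num) (hψint _ _) hIf hle
    have hψval : (∫ t in (-(1:ℝ)/2)..(1/2), ψ t) = u^2 * (1/2) := by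
      have e1 : (∫ t in (-(1:ℝ)/2)..(0:ℝ), ψ t) = u^2 * (1/2) := by
        have : ∀ x ∈ Set.uIoc (-(1:ℝ)/2) (0:ℝ), x ≠ 37 → ψ x = (fun _ => u^2) x := by
          intro x hx _
          rw [Set.uIoc_of_le (by norm_num)] at hx
          simp [hψ, if_pos hx.2]
        rw [integral_offpoint this, intervalIntegral.integral_const, smul_eq_mul]
        ring
      have e2 : (∫ t in (0:ℝ)..((1:ℝ)/2), ψ t) = 0 := by
        have : ∀ x ∈ Set.uIoc (0:ℝ) ((1:ℝ)/2), x ≠ 37 → ψ x = (fun _ => (0:ℝ)) x := by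
          intro x hx _
          rw [Set.uIoc_of_le (by norm_num)] at hx
          simp [hψ, not_le.2 hx.1]
        rw [integral_offpoint this]; simp
      have := intervalIntegral.integral_add_adjacent_intervals (hψint (-(1:ℝ)/2) 0)
        (hψint 0 (1/2))
      rw [← this, e1, e2]; ring
    have h4 : (2*|ε|)^2 < u^2 := by
      have := pow_lt_pow_left₀ hu2 (by positivity : (0:ℝ) ≤ 2*|ε|) (by norm_num : 2 ≠ 0)
      exact this
    have h5 : (2*|ε|)^2 = 4*ε^2 := by rw [mul_pow, sq_abs]; ring
    have hA : u^2 * (1/2) ≤ ε^2 := by rw [← hψval]; exact hcomp.trans hint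
    rw [h5] at h4
    have hz := sq_nonneg ε
    linarith [hA, h4, hz]

end
end CLX3

/-- The local modulus of continuity of `f` at `0` over the class of nondecreasing
functions on `[-1/2, 1/2]`. -/
noncomputable def omegaMonotone (ε : ℝ) (f : ℝ → ℝ) : ℝ :=
  sSup {d : ℝ | ∃ g : ℝ → ℝ, MonotoneOn g (Set.Icc (-(1:ℝ)/2) (1/2)) ∧
    (∫ t in (-(1:ℝ)/2)..(1/2), (g t - f t)^2) ≤ ε^2 ∧ d = |g 0 - f 0|}

/-- Theorem 3 of Cai, Low and Xia (2013): for a nondecreasing `f` on `[-1/2, 1/2]`, with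
`ξ_j = 2^{j-1}(∫_{2^{-j}}^{2^{-j+1}} f − ∫_{-2^{-j+1}}^{-2^{-j}} f)` and
`σ_j = (2^{j-1}/n)^{1/2}`, there is a smallest `j* ≥ 2` with `ξ_{j*} ≤ z σ_{j*}`, and there
is a nondecreasing `g` with `‖f − g‖₂² ≤ z²/n` and `|g(0) − f(0)| ≥ (1/√2) z σ_{j*}`; in
particular `ω(z/√n, f, F_m) ≥ (1/√2) z σ_{j*}`. -/
theorem monotone_modulus_lower_bound
    (z n : ℝ) (hz : 0 < z) (hn : 0 < n)
    (f : ℝ → ℝ) (hf : MonotoneOn f (Set.Icc (-(1:ℝ)/2) (1/2)))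
    (ξ σ : ℕ → ℝ)
    (hξ : ∀ j : ℕ, 2 ≤ j →
      ξ j = (2:ℝ) ^ ((j:ℤ) - 1) *
        ((∫ t in ((2:ℝ) ^ (-(j:ℤ)))..((2:ℝ) ^ (-(j:ℤ) + 1)), f t)
          - ∫ t in (-(2:ℝ) ^ (-(j:ℤ) + 1))..(-(2:ℝ) ^ (-(j:ℤ))), f t))
    (hσ : ∀ j : ℕ, σ j = Real.sqrt ((2:ℝ) ^ ((j:ℤ) - 1) / n)) :
    ∃ jstar : ℕ, 2 ≤ jstar ∧ ξ jstar ≤ z * σ jstar ∧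
      (∀ j : ℕ, 2 ≤ j → ξ j ≤ z * σ j → jstar ≤ j) ∧
      (∃ g : ℝ → ℝ, MonotoneOn g (Set.Icc (-(1:ℝ)/2) (1/2)) ∧
        (∫ t in (-(1:ℝ)/2)..(1/2), (f t - g t)^2) ≤ z^2/n ∧
        (1/Real.sqrt 2) * z * σ jstar ≤ |g 0 - f 0|) ∧
      (1/Real.sqrt 2) * z * σ jstar ≤ omegaMonotone (z/Real.sqrt n) f := by
  classical
  have h2ne : (2:ℝ) ≠ 0 := by norm_num
  have hpow : ∀ m : ℤ, (0:ℝ) < 2 ^ m := fun m => zpow_pos (by norm_num) m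
  have hlm : (-(1:ℝ)/2) ∈ Set.Icc (-(1:ℝ)/2) (1/2) := by constructor <;> norm_num
  have hrm : ((1:ℝ)/2) ∈ Set.Icc (-(1:ℝ)/2) (1/2) := by constructor <;> norm_num
  have h0m : (0:ℝ) ∈ Set.Icc (-(1:ℝ)/2) (1/2) := by constructor <;> norm_num
  have hfi : ∀ a b : ℝ, a ∈ Set.Icc (-(1:ℝ)/2) (1/2) → b ∈ Set.Icc (-(1:ℝ)/2) (1/2) →
      IntervalIntegrable f volume a b := fun a b ha hb =>
    (hf.mono (CLX3.uIcc_subset_II ha hb)).intervalIntegrable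
  have hmono01 : f (-(1:ℝ)/2) ≤ f (1/2) := hf hlm hrm (by norm_num)
  set M : ℝ := (f (1/2) - f (-(1:ℝ)/2)) / 2 with hM
  have hM0 : 0 ≤ M := by rw [hM]; linarith
  -- Bound on ξ
  have hξbound : ∀ j : ℕ, 2 ≤ j → ξ j ≤ M := by
    intro j hj
    rw [hξ j hj]
    have hapos : (0:ℝ) < 2^(-(j:ℤ)) := hpow _
    have hbeq : (2:ℝ)^(-(j:ℤ)+1) = 2 * 2^(-(j:ℤ)) := by
      rw [show -(j:ℤ)+1 = 1 + -(j:ℤ) by ring, zpow_add₀ h2ne, zpow_one]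
    have hbhalf : (2:ℝ)^(-(j:ℤ)+1) ≤ 1/2 := by
      calc (2:ℝ)^(-(j:ℤ)+1) ≤ 2^(-1:ℤ) := zpow_le_zpow_right₀ (by norm_num) (by omega)
        _ = 1/2 := by norm_num
    have ham : (2:ℝ)^(-(j:ℤ)) ∈ Set.Icc (-(1:ℝ)/2) (1/2) := ⟨by linarith, by linarith⟩
    have hbm : (2:ℝ)^(-(j:ℤ)+1) ∈ Set.Icc (-(1:ℝ)/2) (1/2) := ⟨by linarith, hbhalf⟩
    have hmam : -(2:ℝ)^(-(j:ℤ)) ∈ Set.Icc (-(1:ℝ)/2) (1/2) := ⟨by linarith, by linarith⟩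
    have hmbm : -(2:ℝ)^(-(j:ℤ)+1) ∈ Set.Icc (-(1:ℝ)/2) (1/2) := ⟨by linarith, by linarith⟩
    have h1 : (∫ t in ((2:ℝ)^(-(j:ℤ)))..((2:ℝ)^(-(j:ℤ)+1)), f t)
        ≤ ((2:ℝ)^(-(j:ℤ)+1) - 2^(-(j:ℤ))) * f (1/2) := by
      refine CLX3.int_le_const (by linarith) (hfi _ _ ham hbm) fun x hx => ?_
      exact hf ⟨by linarith [hx.1], by linarith [hx.2]⟩ hrm (by linarith [hx.2])
    have h2 : ((-(2:ℝ)^(-(j:ℤ))) - (-(2:ℝ)^(-(j:ℤ)+1))) * f (-(1:ℝ)/2)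
        ≤ ∫ t in (-(2:ℝ)^(-(j:ℤ)+1))..(-(2:ℝ)^(-(j:ℤ))), f t := by
      refine CLX3.const_le_int (by linarith) (hfi _ _ hmbm hmam) fun x hx => ?_
      exact hf hlm ⟨by linarith [hx.1], by linarith [hx.2]⟩ (by linarith [hx.1])
    have hkey : (2:ℝ)^((j:ℤ)-1) * 2^(-(j:ℤ)) = 1/2 := by
      rw [← zpow_add₀ h2ne, show ((j:ℤ)-1) + -(j:ℤ) = -1 by ring]
      norm_num
    have hd : (∫ t in ((2:ℝ)^(-(j:ℤ)))..((2:ℝ)^(-(j:ℤ)+1)), f t)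
        - (∫ t in (-(2:ℝ)^(-(j:ℤ)+1))..(-(2:ℝ)^(-(j:ℤ))), f t)
        ≤ 2^(-(j:ℤ)) * (f (1/2) - f (-(1:ℝ)/2)) := by nlinarith [h1, h2, hbeq]
    calc (2:ℝ)^((j:ℤ)-1) * ((∫ t in ((2:ℝ)^(-(j:ℤ)))..((2:ℝ)^(-(j:ℤ)+1)), f t)
          - ∫ t in (-(2:ℝ)^(-(j:ℤ)+1))..(-(2:ℝ)^(-(j:ℤ))), f t)
        ≤ (2:ℝ)^((j:ℤ)-1) * (2^(-(j:ℤ)) * (f (1/2) - f (-(1:ℝ)/2))) :=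
          mul_le_mul_of_nonneg_left hd (hpow _).le
      _ = ((2:ℝ)^((j:ℤ)-1) * 2^(-(j:ℤ))) * (f (1/2) - f (-(1:ℝ)/2)) := by ring
      _ = M := by rw [hkey, hM]; ring
  have hσnn : ∀ j, 0 ≤ σ j := fun j => by rw [hσ]; exact Real.sqrt_nonneg _
  -- Existence of some admissible j
  have hexists : ∃ j : ℕ, 2 ≤ j ∧ ξ j ≤ z * σ j := by
    obtain ⟨k, hk⟩ := pow_unbounded_of_one_lt (n * (M/z)^2) (by norm_num : (1:ℝ) < 2)
    refine ⟨k+2, by omega, ?_⟩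
    have h1 : ξ (k+2) ≤ M := hξbound _ (by omega)
    have h2 : M ≤ z * σ (k+2) := by
      rw [hσ]
      have hle2 : n * (M/z)^2 < 2^(((k+2:ℕ):ℤ) - 1) := by
        have he : ((k+2:ℕ):ℤ) - 1 = ((k+1 : ℕ) : ℤ) := by push_cast; ring
        rw [he, zpow_natCast]
        calc n*(M/z)^2 < 2^k := hk
          _ ≤ 2^(k+1) := pow_le_pow_right₀ (by norm_num) (by omega)
      have h3 : (M/z)^2 ≤ 2^(((k+2:ℕ):ℤ) - 1)/n := by
        rw [le_div_iff₀ hn]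
        nlinarith [hle2]
      have h4 : M/z ≤ Real.sqrt (2^(((k+2:ℕ):ℤ) - 1)/n) := by
        have := Real.sqrt_le_sqrt h3
        rwa [Real.sqrt_sq (div_nonneg hM0 hz.le)] at this
      calc M = z * (M/z) := by field_simp
        _ ≤ z * Real.sqrt (2^(((k+2:ℕ):ℤ) - 1)/n) :=
            mul_le_mul_of_nonneg_left h4 hz.le
    linarith
  set J := Nat.find hexists with hJdef
  obtain ⟨hJ2, hJle⟩ := Nat.find_spec hexists
  have hminJ : ∀ j : ℕ, 2 ≤ j → ξ j ≤ z * σ j → J ≤ j := fun j h1 h2 =>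
    Nat.find_min' hexists ⟨h1, h2⟩
  set c := 1/Real.sqrt 2 * z * σ J with hc
  have hc0 : 0 ≤ c := by
    rw [hc]
    exact mul_nonneg (mul_nonneg (by positivity) hz.le) (hσnn J)
  have hcsq : c^2 = z^2 * (2:ℝ)^((J:ℤ)-1) / (2*n) := by
    rw [hc, hσ]
    rw [mul_pow, mul_pow, div_pow, one_pow, Real.sq_sqrt (by norm_num : (0:ℝ) ≤ 2),
      Real.sq_sqrt (div_nonneg (hpow _).le hn.le)]
    field_simp
  -- construction of the perturbation g
  obtain ⟨g, hgmono, hgcost, hgabs⟩ : ∃ g : ℝ → ℝ, MonotoneOn g (Set.Icc (-(1:ℝ)/2) (1/2)) ∧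
      (∫ t in (-(1:ℝ)/2)..(1/2), (f t - g t)^2) ≤ z^2/n ∧ |g 0 - f 0| = c := by
    by_cases hJ3 : 3 ≤ J
    · -- main case: use the minimality at J - 1
      have hprev : ¬ (2 ≤ J - 1 ∧ ξ (J-1) ≤ z * σ (J-1)) := Nat.find_min hexists (by omega)
      have hprev2 : z * σ (J-1) < ξ (J-1) := by
        by_contra hcon
        push_neg at hcon
        exact hprev ⟨by omega, hcon⟩
      have hcast : ((J-1 : ℕ):ℤ) = (J:ℤ) - 1 := by
        rw [Nat.cast_sub (by omega : 1 ≤ J)]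
        simp
      rw [hξ (J-1) (by omega), hσ (J-1), hcast] at hprev2
      rw [show -((J:ℤ)-1)+1 = -(J:ℤ)+2 by ring, show -((J:ℤ)-1) = -(J:ℤ)+1 by ring,
        show ((J:ℤ)-1)-1 = (J:ℤ)-2 by ring] at hprev2
      set B1 : ℝ := 2^(-(J:ℤ)+1) with hB1
      set B2 : ℝ := 2^(-(J:ℤ)+2) with hB2
      set A1 : ℝ := ∫ t in B1..B2, f t with hA1
      set A2 : ℝ := ∫ t in (-B2)..(-B1), f t with hA2
      have hB1pos : 0 < B1 := hpow _
      have hB2pos : 0 < B2 := hpow _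
      have hB2eq : B2 = 2 * B1 := by
        rw [hB1, hB2, show -(J:ℤ)+2 = 1 + (-(J:ℤ)+1) by ring, zpow_add₀ h2ne, zpow_one]
      have hB2half : B2 ≤ 1/2 := by
        rw [hB2]
        calc (2:ℝ)^(-(J:ℤ)+2) ≤ 2^(-1:ℤ) := zpow_le_zpow_right₀ (by norm_num) (by omega)
          _ = 1/2 := by norm_num
      have hB1ltB2 : B1 < B2 := by rw [hB2eq]; linarith
      have hB1m : B1 ∈ Set.Icc (-(1:ℝ)/2) (1/2) := ⟨by linarith, by linarith⟩
      have hB2m : B2 ∈ Set.Icc (-(1:ℝ)/2) (1/2) := ⟨by linarith, hB2half⟩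
      have hmB1m : -B1 ∈ Set.Icc (-(1:ℝ)/2) (1/2) := ⟨by linarith, by linarith⟩
      have hmB2m : -B2 ∈ Set.Icc (-(1:ℝ)/2) (1/2) := ⟨by linarith, by linarith⟩
      have hc' : z * Real.sqrt ((2:ℝ)^((J:ℤ)-2)/n) = c := by
        rw [hc, hσ]
        rw [show ((J:ℤ)-1) = 1 + ((J:ℤ)-2) by ring, zpow_add₀ h2ne, zpow_one]
        rw [show (2 * (2:ℝ)^((J:ℤ)-2)) / n = 2 * ((2:ℝ)^((J:ℤ)-2)/n) by ring]
        rw [Real.sqrt_mul (by norm_num : (0:ℝ) ≤ 2)]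
        have hs2 : Real.sqrt 2 ≠ 0 := by positivity
        field_simp
      rw [hc'] at hprev2
      have hq : (2:ℝ)^((J:ℤ)-2) * B2 = 1 := by
        rw [hB2, ← zpow_add₀ h2ne, show ((J:ℤ)-2) + (-(J:ℤ)+2) = 0 by ring, zpow_zero]
      have hkey : c * B2 < A1 - A2 := by
        have h5 := mul_lt_mul_of_pos_right hprev2 hB2pos
        calc c * B2 < ((2:ℝ)^((J:ℤ)-2) * (A1 - A2)) * B2 := h5
          _ = (A1 - A2) * ((2:ℝ)^((J:ℤ)-2) * B2) := by ring
          _ = A1 - A2 := by rw [hq, mul_one]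
      have hcostB2 : c^2 * B2 = z^2/n := by
        have h6 : (2:ℝ)^((J:ℤ)-1) * B2 = 2 := by
          rw [hB2, ← zpow_add₀ h2ne, show ((J:ℤ)-1) + (-(J:ℤ)+2) = 1 by ring, zpow_one]
        calc c^2 * B2 = z^2 * ((2:ℝ)^((J:ℤ)-1) * B2) / (2*n) := by rw [hcsq]; ring
          _ = z^2 * 2 / (2*n) := by rw [h6]
          _ = z^2/n := by
              rw [div_eq_div_iff (by positivity : (2:ℝ)*n ≠ 0) (ne_of_gt hn)]
              ring
      by_cases hR : B1 * (f 0 + c) < A1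
      · -- perturb on the right
        have hm : (f 0 + c) * (B2 - B1) < ∫ t in B1..B2, f t := by
          have : B2 - B1 = B1 := by rw [hB2eq]; ring
          rw [this, mul_comm, ← hA1]
          exact hR
        obtain ⟨t0, ht0mem, ht0⟩ := CLX3.markov_hi hB1ltB2.le (hfi _ _ hB1m hB2m) hm
        have ht0pos : 0 < t0 := lt_of_lt_of_le hB1pos ht0mem.1
        have ht0half : t0 ≤ 1/2 := le_trans ht0mem.2.le hB2half
        have ht0m : t0 ∈ Set.Icc (-(1:ℝ)/2) (1/2) := ⟨by linarith, ht0half⟩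
        obtain ⟨g, hg1, hg2, hg3⟩ := CLX3.constrR hf hc0 ht0pos ht0half (fun t ht1 ht2 =>
          le_trans ht0.le (hf ht0m ⟨by linarith, ht2⟩ ht1.le))
        refine ⟨g, hg1, ?_, hg3⟩
        calc (∫ t in (-(1:ℝ)/2)..(1/2), (f t - g t)^2) ≤ c^2 * t0 := hg2
          _ ≤ c^2 * B2 := mul_le_mul_of_nonneg_left (by linarith [ht0mem.2]) (sq_nonneg c)
          _ = z^2/n := hcostB2
      · -- perturb on the left
        push_neg at hR
        have hcb : c * B2 = 2*(B1*c) := by rw [hB2eq]; ring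
        have hexp : B1*(f 0 - c) = B1*(f 0 + c) - 2*(B1*c) := by ring
        have hL : A2 < B1 * (f 0 - c) := by linarith [hkey, hR, hcb, hexp]
        have hm : (∫ t in (-B2)..(-B1), f t) < (f 0 - c) * ((-B1) - (-B2)) := by
          have : (-B1) - (-B2) = B1 := by rw [hB2eq]; ring
          rw [this, mul_comm, ← hA2]
          exact hL
        obtain ⟨t0, ht0mem, ht0⟩ := CLX3.markov_lo (by linarith : -B2 ≤ -B1) (hfi _ _ hmB2m hmB1m) hm
        have ht0neg : t0 < 0 := lt_of_le_of_lt ht0mem.2 (by linarith)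
        have ht0low : -(1:ℝ)/2 ≤ t0 := by linarith [ht0mem.1]
        have ht0m : t0 ∈ Set.Icc (-(1:ℝ)/2) (1/2) := ⟨ht0low, by linarith⟩
        obtain ⟨g, hg1, hg2, hg3⟩ := CLX3.constrL hf hc0 ht0neg ht0low (fun t ht1 ht2 =>
          le_trans (hf ⟨ht1, by linarith⟩ ht0m ht2) ht0.le)
        refine ⟨g, hg1, ?_, hg3⟩
        calc (∫ t in (-(1:ℝ)/2)..(1/2), (f t - g t)^2) ≤ c^2 * (-t0) := hg2
          _ ≤ c^2 * B2 := mul_le_mul_of_nonneg_left (by linarith [ht0mem.1]) (sq_nonneg c)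
          _ = z^2/n := hcostB2
    · -- J = 2 : crude bound suffices
      have hJeq : J = 2 := by omega
      obtain ⟨g, hg1, hg2, hg3⟩ := CLX3.constrR hf hc0 (by norm_num : (0:ℝ) < 1/2) le_rfl
        (fun t ht1 ht2 => absurd (lt_of_lt_of_le ht1 ht2) (lt_irrefl _))
      refine ⟨g, hg1, ?_, hg3⟩
      have hcv : c^2 = z^2/n := by
        rw [hcsq, hJeq, show (((2:ℕ):ℤ) - 1) = 1 by norm_num, zpow_one]
        rw [div_eq_div_iff (by positivity : (2:ℝ)*n ≠ 0) (ne_of_gt hn)]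
        ring
      have hnn : 0 ≤ z^2/n := div_nonneg (sq_nonneg z) hn.le
      calc (∫ t in (-(1:ℝ)/2)..(1/2), (f t - g t)^2) ≤ c^2 * (1/2) := hg2
        _ ≤ z^2/n := by rw [hcv]; linarith
  -- conclusion
  refine ⟨J, hJ2, hJle, hminJ, ⟨g, hgmono, hgcost, le_of_eq hgabs.symm⟩, ?_⟩
  have hmem : |g 0 - f 0| ∈ {d : ℝ | ∃ g' : ℝ → ℝ, MonotoneOn g' (Set.Icc (-(1:ℝ)/2) (1/2)) ∧
      (∫ t in (-(1:ℝ)/2)..(1/2), (g' t - f t)^2) ≤ (z/Real.sqrt n)^2 ∧ d = |g' 0 - f 0|} := by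
    refine ⟨g, hgmono, ?_, rfl⟩
    have e2 : (z/Real.sqrt n)^2 = z^2/n := by rw [div_pow, Real.sq_sqrt hn.le]
    rw [e2]
    calc (∫ t in (-(1:ℝ)/2)..(1/2), (g t - f t)^2)
        = ∫ t in (-(1:ℝ)/2)..(1/2), (f t - g t)^2 :=
          intervalIntegral.integral_congr (fun x _ => by ring)
      _ ≤ z^2/n := hgcost
  calc (1/Real.sqrt 2) * z * σ J = c := hc.symm
    _ ≤ |g 0 - f 0| := le_of_eq hgabs.symm
    _ ≤ omegaMonotone (z/Real.sqrt n) f := le_csSup (CLX3.bddAboveS hf _) hmem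
end

section
/- Let f : [-1/2,1/2] → ℝ be convex, set f_s(t) = (f(t)+f(−t))/2 − f(0), and let 0 < t* ≤ 1/2. Then there exists a convex function g on [-1/2,1/2] with g(0) − f(0) = f_s(t*) and ∫_{-1/2}^{1/2} (g(t) − f(t))² dt ≤ (9/4) f_s(t*)² t*. -/
open MeasureTheory

open Set



lemma maxcube (x : ℝ) : HasDerivAt (fun y : ℝ => (max y 0)^3) (3 * (max x 0)^2) x := by
  rcases lt_trichotomy x 0 with h | h | h
  · have hev : (fun y : ℝ => (max y 0)^3) =ᶠ[nhds x] fun _ => (0:ℝ) := by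
      filter_upwards [Iio_mem_nhds h] with y hy
      rw [max_eq_right (le_of_lt (mem_Iio.mp hy))]
      norm_num
    have h0 : HasDerivAt (fun _ : ℝ => (0:ℝ)) 0 x := hasDerivAt_const x 0
    have := h0.congr_of_eventuallyEq hev
    simpa [max_eq_right h.le] using this
  · subst h
    rw [hasDerivAt_iff_tendsto_slope]
    have hb : ∀ y : ℝ, ‖slope (fun y : ℝ => (max y 0)^3) 0 y‖ ≤ y^2 := by
      intro y
      rcases le_or_gt y 0 with hy | hy
      · rw [slope, max_eq_right hy]
        simp
        positivity
      · rw [slope, max_eq_left hy.le]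
        simp only [vsub_eq_sub, sub_zero, smul_eq_mul]
        rw [max_eq_right le_rfl]
        have h3 : y⁻¹ * (y^3 - 0^3) = y^2 := by field_simp; ring
        rw [h3, Real.norm_eq_abs, abs_of_nonneg (by positivity)]
    have hg : Filter.Tendsto (fun y : ℝ => y^2) (nhdsWithin 0 {(0:ℝ)}ᶜ) (nhds 0) := by
      have h2 : Filter.Tendsto (fun y : ℝ => y^2) (nhds 0) (nhds (0^2)) :=
        (continuous_pow 2).tendsto (0:ℝ)
      norm_num at h2
      exact h2.mono_left nhdsWithin_le_nhds
    have := squeeze_zero_norm hb hg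
    rw [max_eq_right le_rfl]
    norm_num
    exact this
  · have hev : (fun y : ℝ => (max y 0)^3) =ᶠ[nhds x] fun y => y^3 := by
      filter_upwards [Ioi_mem_nhds h] with y hy
      rw [max_eq_left (le_of_lt (mem_Ioi.mp hy))]
    have h0 : HasDerivAt (fun y : ℝ => y^3) (3 * x^2) x := by
      simpa using hasDerivAt_pow 3 x
    have := h0.congr_of_eventuallyEq hev
    simpa [max_eq_left h.le] using this

lemma convexOn_affine (A B : ℝ) {s : Set ℝ} (hs : Convex ℝ s) :
    ConvexOn ℝ s (fun t => A + B * t) := by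
  refine ⟨hs, fun x _ y _ a b ha hb hab => ?_⟩
  simp only [smul_eq_mul]
  have h2 : a * (A + B * x) + b * (A + B * y) = (a + b) * A + B * (a * x + b * y) := by
    ring
  rw [h2, hab, one_mul]

set_option maxHeartbeats 1000000 in
lemma aux_pert (f : ℝ → ℝ) (hf : ConvexOn ℝ (Set.Icc (-(1:ℝ)/2) (1/2)) f)
    (tstar : ℝ) (ht0 : 0 < tstar) (ht1 : tstar ≤ 1/2)
    (d0 : ℝ) (hd : ∀ t ∈ Set.Icc (-(1:ℝ)/2) (1/2), f 0 + d0 * t ≤ f t)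
    (hnu : 0 ≤ (f tstar - f (-tstar))/2 - d0 * tstar) :
    ∃ g : ℝ → ℝ, ConvexOn ℝ (Set.Icc (-(1:ℝ)/2) (1/2)) g ∧
      g 0 - f 0 = (f tstar + f (-tstar))/2 - f 0 ∧
      (∫ t in (-(1:ℝ)/2)..(1/2), (g t - f t)^2) ≤
        (9/4) * ((f tstar + f (-tstar))/2 - f 0)^2 * tstar := by
  set c := (f tstar + f (-tstar))/2 - f 0 with hc
  set ν := (f tstar - f (-tstar))/2 - d0 * tstar with hν
  have htm : tstar ∈ Set.Icc (-(1:ℝ)/2) (1/2) := by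
    constructor <;> [linarith; linarith]
  have htm' : -tstar ∈ Set.Icc (-(1:ℝ)/2) (1/2) := by
    constructor <;> [linarith; linarith]
  have hG : ∀ t ∈ Set.Icc (-(1:ℝ)/2) (1/2), 0 ≤ f t - f 0 - d0 * t := by
    intro t ht; have := hd t ht; linarith
  have hGt : f tstar - f 0 - d0 * tstar = c + ν := by rw [hc, hν]; ring
  have hGm : f (-tstar) - f 0 - d0 * (-tstar) = c - ν := by rw [hc, hν]; ring
  have hc0 : 0 ≤ c := by
    have h1 := hG tstar htm
    have h2 := hG (-tstar) htm'
    rw [hGt] at h1; rw [hGm] at h2; linarith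
  have hνc : ν ≤ c := by
    have h2 := hG (-tstar) htm'; rw [hGm] at h2; linarith
  have hν0 : 0 ≤ ν := hnu
  clear_value c ν
  rcases eq_or_lt_of_le hc0 with hczero | hcpos
  · refine ⟨f, hf, by rw [← hczero]; ring, ?_⟩
    have h0' : (∫ t in (-(1:ℝ)/2)..(1/2), (f t - f t)^2) = 0 := by simp
    rw [h0', ← hczero]
    norm_num
  -- main case
  set m := min ν (c/2) / tstar with hm
  set K := c / (2*tstar) with hK
  set L := fun t : ℝ => f 0 + c + (d0 + m) * t with hL
  set g := fun t : ℝ => max (f t) (L t) with hg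
  have hm0 : 0 ≤ m := div_nonneg (le_min hν0 (by linarith)) ht0.le
  have hmt : m * tstar = min ν (c/2) := by rw [hm]; field_simp
  have hmν : m * tstar ≤ ν := by rw [hmt]; exact min_le_left _ _
  have hmc : m * tstar ≤ c/2 := by rw [hmt]; exact min_le_right _ _
  have hKt : K * tstar = c/2 := by rw [hK]; field_simp
  have hK0 : 0 < K := by rw [hK]; positivity
  clear_value m K
  -- convexity of g
  have hgconv : ConvexOn ℝ (Set.Icc (-(1:ℝ)/2) (1/2)) g := by
    have hLc : ConvexOn ℝ (Set.Icc (-(1:ℝ)/2) (1/2)) L := by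
      have := convexOn_affine (f 0 + c) (d0 + m) (convex_Icc (-(1:ℝ)/2) (1/2))
      simpa [hL] using this
    have hsup := hf.sup hLc
    have hfeq : g = f ⊔ L := by
      funext t
      rfl
    rw [hfeq]
    exact hsup
  have hg0 : g 0 - f 0 = c := by
    have : g 0 = max (f 0) (f 0 + c) := by simp [hg, hL]
    rw [this, max_eq_right (by linarith)]
    ring
  -- convexity slope facts
  have hmem0 : (0:ℝ) ∈ Set.Icc (-(1:ℝ)/2) (1/2) := by norm_num
  have hcvxR : ∀ t, tstar ≤ t → t ≤ 1/2 → (c + ν) * t ≤ (f t - f 0 - d0 * t) * tstar := by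
    intro t h1 h2
    rcases eq_or_lt_of_le h1 with heq | hlt
    · rw [← heq, ← hGt]
    · have h0t : 0 < t := lt_trans ht0 hlt
      have ha : 0 ≤ (t - tstar)/t := div_nonneg (by linarith) h0t.le
      have hb : 0 ≤ tstar/t := div_nonneg ht0.le h0t.le
      have hab : (t - tstar)/t + tstar/t = 1 := by field_simp; ring
      have hmemt : t ∈ Set.Icc (-(1:ℝ)/2) (1/2) := ⟨by linarith, h2⟩
      have key := hf.2 hmem0 hmemt ha hb hab
      simp only [smul_eq_mul, mul_zero, zero_add] at key
      have harg : tstar/t*t = tstar := by field_simp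
      rw [harg] at key
      have key2 : f tstar * t ≤ (t - tstar) * f 0 + tstar * f t := by
        have hmul := mul_le_mul_of_nonneg_right key h0t.le
        have hA : ((t - tstar)/t * f 0 + tstar/t * f t) * t
            = (t - tstar) * f 0 + tstar * f t := by
          field_simp
        rw [hA] at hmul
        linarith [hmul]
      rw [← hGt]
      nlinarith [key2]
  have hcvxL : ∀ t, -(1:ℝ)/2 ≤ t → t ≤ -tstar → (c - ν) * (-t) ≤ (f t - f 0 - d0 * t) * tstar := by
    intro t h1 h2
    rcases eq_or_lt_of_le h2 with heq | hlt
    · rw [heq, ← hGm]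
      apply le_of_eq
      ring
    · have h0t : t < 0 := by linarith
      have htne : t ≠ 0 := h0t.ne
      have ha : 0 ≤ (-t - tstar)/(-t) := div_nonneg (by linarith) (by linarith)
      have hb : 0 ≤ tstar/(-t) := div_nonneg ht0.le (by linarith)
      have hab : (-t - tstar)/(-t) + tstar/(-t) = 1 := by
        field_simp
        ring
      have hmemt : t ∈ Set.Icc (-(1:ℝ)/2) (1/2) := ⟨h1, by linarith⟩
      have key := hf.2 hmem0 hmemt ha hb hab
      simp only [smul_eq_mul, mul_zero, zero_add] at key
      have harg : tstar/(-t)*t = -tstar := by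
        field_simp
      rw [harg] at key
      have key2 : f (-tstar) * (-t) ≤ (-t - tstar) * f 0 + tstar * f t := by
        have hmul := mul_le_mul_of_nonneg_right key (by linarith : (0:ℝ) ≤ -t)
        have hA : ((-t - tstar)/(-t) * f 0 + tstar/(-t) * f t) * (-t)
            = (-t - tstar) * f 0 + tstar * f t := by
          field_simp
          ring
        rw [hA] at hmul
        linarith [hmul]
      rw [← hGm]
      nlinarith [key2]
  -- piece 3: g = f on [tstar, 1/2]
  have hp3 : ∀ t ∈ Set.Icc tstar (1/2), g t = f t := by
    intro t ht
    have hcv := hcvxR t ht.1 ht.2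
    have hLf : L t ≤ f t := by
      have h1 : (c + m*t) * tstar ≤ (c + ν) * t := by
        nlinarith [ht.1, ht0]
      have h2 : (c + m*t) * tstar ≤ (f t - f 0 - d0*t) * tstar := le_trans h1 hcv
      have h3 : c + m*t ≤ f t - f 0 - d0*t := le_of_mul_le_mul_right h2 ht0
      simp only [hL]; linarith
    simp only [hg]; exact max_eq_left hLf
  -- pointwise bound on piece 2
  have hp2 : ∀ t ∈ Set.Icc (-tstar) tstar, (g t - f t)^2 ≤ (c + m*t)^2 := by
    intro t ht
    have htI : t ∈ Set.Icc (-(1:ℝ)/2) (1/2) := ⟨by linarith [ht.1], by linarith [ht.2]⟩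
    have hGnn := hG t htI
    have hphi : g t - f t = max (L t - f t) 0 := by
      simp only [hg]
      rw [max_comm]
      exact (max_sub_sub_right (L t) (f t) (f t)).symm.trans (by rw [sub_self])
    have h1 : L t - f t ≤ c + m*t := by simp only [hL]; linarith
    have h2 : 0 ≤ c + m*t := by nlinarith [ht.1, ht0]
    rw [hphi]
    have h3 : max (L t - f t) 0 ≤ c + m*t := max_le h1 h2
    exact pow_le_pow_left₀ (le_max_right _ _) h3 2
  -- pointwise bound on piece 1
  have hp1 : ∀ t ∈ Set.Icc (-(1:ℝ)/2) (-tstar), (g t - f t)^2 ≤ (max (c + K*t) 0)^2 := by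
    intro t ht
    have htI : t ∈ Set.Icc (-(1:ℝ)/2) (1/2) := ⟨ht.1, by linarith [ht.2]⟩
    have hcv := hcvxL t ht.1 ht.2
    have hphi : g t - f t = max (L t - f t) 0 := by
      simp only [hg]
      rw [max_comm]
      exact (max_sub_sub_right (L t) (f t) (f t)).symm.trans (by rw [sub_self])
    have hmm : c/2 ≤ m * tstar + (c - ν) := by
      rw [hmt]
      rcases le_total ν (c/2) with h | h
      · rw [min_eq_left h]; linarith
      · rw [min_eq_right h]; linarith
    have hkey : (L t - f t) * tstar ≤ (c + K*t) * tstar := by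
      have hLt : L t - f t = c + m*t - (f t - f 0 - d0*t) := by simp only [hL]; ring
      rw [hLt]
      have hexp : (c + K*t) * tstar = c*tstar + (c/2)*t := by
        have : (c + K*t) * tstar = c*tstar + (K*tstar)*t := by ring
        rw [this, hKt]
      rw [hexp]
      nlinarith [hcv, mul_nonneg (sub_nonneg.mpr hmm) (by linarith [ht.2] : (0:ℝ) ≤ -t)]
    have hle : L t - f t ≤ c + K*t := le_of_mul_le_mul_right hkey ht0
    have h3 : max (L t - f t) 0 ≤ max (c + K*t) 0 := max_le (le_trans hle (le_max_left _ _)) (le_max_right _ _)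
    rw [hphi]
    exact pow_le_pow_left₀ (le_max_right _ _) h3 2
  -- continuity and integrability
  have hfc : ContinuousOn f (Set.Ioo (-(1:ℝ)/2) (1/2)) :=
    ConvexOn.continuousOn isOpen_Ioo (hf.subset Set.Ioo_subset_Icc_self (convex_Ioo _ _))
  have hLcont : Continuous L := by
    rw [hL]
    exact continuous_const.add (continuous_const.mul continuous_id)
  have hgcont : ContinuousOn g (Set.Ioo (-(1:ℝ)/2) (1/2)) := by
    rw [hg]
    exact ContinuousOn.sup hfc hLcont.continuousOn
  have hhcont : ContinuousOn (fun t => (g t - f t)^2) (Set.Ioo (-(1:ℝ)/2) (1/2)) :=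
    (hgcont.sub hfc).pow 2
  have hbd : ∀ t ∈ Set.Icc (-(1:ℝ)/2) (1/2), (g t - f t)^2 ≤ (3*c/2)^2 := by
    intro t ht
    rcases le_total t (-tstar) with h | h
    · refine le_trans (hp1 t ⟨ht.1, h⟩) ?_
      have hKtneg : K * t ≤ 0 := mul_nonpos_of_nonneg_of_nonpos hK0.le (by linarith)
      have h1 : max (c + K*t) 0 ≤ 3*c/2 := max_le (by linarith) (by linarith)
      exact pow_le_pow_left₀ (le_max_right _ _) h1 2
    · rcases le_total t tstar with h' | h'
      · refine le_trans (hp2 t ⟨h, h'⟩) ?_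
        have hub : c + m*t ≤ 3*c/2 := by nlinarith [hm0, hmc]
        have hlb : -(3*c/2) ≤ c + m*t := by nlinarith [hm0, hmc]
        have := sq_le_sq' hlb hub
        simpa [sq] using this
      · rw [hp3 t ⟨h', ht.2⟩]
        simp only [sub_self]
        norm_num
        positivity
  have hInt : ∀ a b : ℝ, -(1:ℝ)/2 ≤ a → b ≤ 1/2 → a ≤ b →
      IntervalIntegrable (fun t => (g t - f t)^2) volume a b := by
    intro a b ha hb hab
    rw [intervalIntegrable_iff_integrableOn_Ioc_of_le hab,
      integrableOn_Ioc_iff_integrableOn_Ioo]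
    have hsub : Set.Ioo a b ⊆ Set.Ioo (-(1:ℝ)/2) (1/2) := Set.Ioo_subset_Ioo ha hb
    have hmeas : AEStronglyMeasurable (fun t => (g t - f t)^2) (volume.restrict (Set.Ioo a b)) :=
      (hhcont.mono hsub).aestronglyMeasurable measurableSet_Ioo
    refine Integrable.mono' (integrable_const ((3*c/2)^2)) hmeas ?_
    rw [ae_restrict_iff' measurableSet_Ioo]
    refine Filter.Eventually.of_forall fun x hx => ?_
    have hxI : x ∈ Set.Icc (-(1:ℝ)/2) (1/2) := ⟨by linarith [hx.1], by linarith [hx.2]⟩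
    rw [Real.norm_eq_abs, abs_of_nonneg (by positivity)]
    exact hbd x hxI
  have hiA : IntervalIntegrable (fun t => (g t - f t)^2) volume (-(1:ℝ)/2) (-tstar) :=
    hInt _ _ le_rfl (by linarith) (by linarith)
  have hiB : IntervalIntegrable (fun t => (g t - f t)^2) volume (-tstar) tstar :=
    hInt _ _ (by linarith) (by linarith) (by linarith)
  have hiC : IntervalIntegrable (fun t => (g t - f t)^2) volume tstar (1/2) :=
    hInt _ _ (by linarith) le_rfl (by linarith)
  have e1 := intervalIntegral.integral_add_adjacent_intervals hiA hiB
  have e2 := intervalIntegral.integral_add_adjacent_intervals (hiA.trans hiB) hiC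
  have hI3 : (∫ t in tstar..(1/2:ℝ), (g t - f t)^2) = 0 := by
    have heq : Set.EqOn (fun t => (g t - f t)^2) (fun _ => (0:ℝ)) (Set.uIcc tstar (1/2)) := by
      intro x hx
      rw [Set.uIcc_of_le (by linarith : tstar ≤ (1:ℝ)/2)] at hx
      simp [hp3 x hx]
    rw [intervalIntegral.integral_congr heq]
    simp
  -- piece 2 integral
  have hcont2 : Continuous (fun t : ℝ => (c + m*t)^2) :=
    (continuous_const.add (continuous_const.mul continuous_id)).pow 2
  have hB : ∀ x ∈ Set.uIcc (-tstar) tstar,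
      HasDerivAt (fun t => c^2*t + c*m*t^2 + m^2*t^3/3) ((c + m*x)^2) x := by
    intro x _
    have h1 : HasDerivAt (fun t : ℝ => c^2*t) (c^2) x := by
      simpa using (hasDerivAt_id x).const_mul (c^2)
    have h2 : HasDerivAt (fun t : ℝ => c*m*t^2) (c*m*(2*x)) x := by
      have := (hasDerivAt_pow 2 x).const_mul (c*m)
      simpa using this
    have h3 : HasDerivAt (fun t : ℝ => m^2*t^3/3) (m^2*(3*x^2)/3) x := by
      have := ((hasDerivAt_pow 3 x).const_mul (m^2)).div_const 3
      simpa using this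
    have hsum := (h1.add h2).add h3
    refine hsum.congr_deriv ?_
    ring
  have heqB := intervalIntegral.integral_eq_sub_of_hasDerivAt hB
    (hcont2.intervalIntegrable _ _)
  have hI2 : (∫ t in (-tstar)..tstar, (g t - f t)^2) ≤ 2*c^2*tstar + 2/3*m^2*tstar^3 := by
    have hmono := intervalIntegral.integral_mono_on (by linarith : -tstar ≤ tstar) hiB
      (hcont2.intervalIntegrable _ _) hp2
    rw [heqB] at hmono
    calc (∫ t in (-tstar)..tstar, (g t - f t)^2)
        ≤ (c^2*tstar + c*m*tstar^2 + m^2*tstar^3/3)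
          - (c^2*(-tstar) + c*m*(-tstar)^2 + m^2*(-tstar)^3/3) := hmono
      _ = 2*c^2*tstar + 2/3*m^2*tstar^3 := by ring
  -- piece 1 integral
  have hcont1 : Continuous (fun t : ℝ => (max (c + K*t) 0)^2) := by
    apply Continuous.pow
    exact (continuous_const.add (continuous_const.mul continuous_id)).max continuous_const
  have hA : ∀ x ∈ Set.uIcc (-(1:ℝ)/2) (-tstar),
      HasDerivAt (fun t => (max (c + K*t) 0)^3/(3*K)) ((max (c + K*x) 0)^2) x := by
    intro x _
    have hu : HasDerivAt (fun t : ℝ => c + K*t) K x := by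
      simpa using ((hasDerivAt_id x).const_mul K).const_add c
    have hcomp := (maxcube (c + K*x)).comp x hu
    have h2 := hcomp.div_const (3*K)
    refine h2.congr_deriv ?_
    field_simp
  have heqA := intervalIntegral.integral_eq_sub_of_hasDerivAt hA
    (hcont1.intervalIntegrable _ _)
  have hI1 : (∫ t in (-(1:ℝ)/2)..(-tstar), (g t - f t)^2) ≤ c^2*tstar/12 := by
    have hmono := intervalIntegral.integral_mono_on (by linarith : -(1:ℝ)/2 ≤ -tstar) hiA
      (hcont1.intervalIntegrable _ _) hp1
    rw [heqA] at hmono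
    have hval : c + K*(-tstar) = c/2 := by
      have : K*(-tstar) = -(K*tstar) := by ring
      rw [this, hKt]; ring
    have hmax : max (c + K*(-tstar)) 0 = c/2 := by
      rw [hval, max_eq_left (by linarith)]
    rw [hmax] at hmono
    have hnn : 0 ≤ (max (c + K*(-(1:ℝ)/2)) 0)^3/(3*K) := by positivity
    have hcomp : (c/2)^3/(3*K) = c^2*tstar/12 := by
      rw [hK]
      have htne : tstar ≠ 0 := ht0.ne'
      have hcne : c ≠ 0 := hcpos.ne'
      field_simp
      ring
    calc (∫ t in (-(1:ℝ)/2)..(-tstar), (g t - f t)^2)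
        ≤ (c/2)^3/(3*K) - (max (c + K*(-(1:ℝ)/2)) 0)^3/(3*K) := hmono
      _ ≤ (c/2)^3/(3*K) := by linarith
      _ = c^2*tstar/12 := hcomp
  -- combine
  refine ⟨g, hgconv, hg0, ?_⟩
  rw [← e2, ← e1, hI3, add_zero]
  have hm2 : m^2*tstar^3 ≤ c^2*tstar/4 := by
    nlinarith [mul_self_le_mul_self (mul_nonneg hm0 ht0.le) hmc, ht0.le]
  linarith [hI1, hI2]

lemma convexOn_comp_neg {f : ℝ → ℝ} (hf : ConvexOn ℝ (Set.Icc (-(1:ℝ)/2) (1/2)) f) :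
    ConvexOn ℝ (Set.Icc (-(1:ℝ)/2) (1/2)) (fun t => f (-t)) := by
  refine ⟨convex_Icc _ _, fun x hx y hy a b ha hb hab => ?_⟩
  simp only [mem_Icc] at hx hy
  have hx' : -x ∈ Set.Icc (-(1:ℝ)/2) (1/2) := by
    simp only [mem_Icc]; constructor <;> linarith [hx.1, hx.2]
  have hy' : -y ∈ Set.Icc (-(1:ℝ)/2) (1/2) := by
    simp only [mem_Icc]; constructor <;> linarith [hy.1, hy.2]
  have key := hf.2 hx' hy' ha hb hab
  simp only [smul_eq_mul] at key ⊢
  have harg : a * -x + b * -y = -(a * x + b * y) := by ring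
  rw [harg] at key
  exact key

lemma exists_subgrad (f : ℝ → ℝ) (hf : ConvexOn ℝ (Set.Icc (-(1:ℝ)/2) (1/2)) f) :
    ∃ d : ℝ, ∀ t ∈ Set.Icc (-(1:ℝ)/2) (1/2), f 0 + d * t ≤ f t := by
  have h0 : (0:ℝ) ∈ Set.Icc (-(1:ℝ)/2) (1/2) := by norm_num
  have hm : (-(1:ℝ)/2) ∈ Set.Icc (-(1:ℝ)/2) (1/2) := by norm_num
  set S := (fun u : ℝ => (f u - f 0) / u) '' Set.Ioc 0 (1/2) with hS
  have hne : S.Nonempty := ⟨(f (1/2) - f 0) / (1/2), ⟨1/2, by norm_num, rfl⟩⟩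
  have hlow : ∀ w ∈ Set.Ioc (0:ℝ) (1/2), (f 0 - f (-(1:ℝ)/2)) / (0 - (-(1:ℝ)/2)) ≤ (f w - f 0) / (w - 0) := by
    intro w hw
    exact hf.slope_mono_adjacent hm ⟨by linarith [hw.1], hw.2⟩ (by norm_num) hw.1
  have hbdd : BddBelow S := by
    refine ⟨(f 0 - f (-(1:ℝ)/2)) / (0 - (-(1:ℝ)/2)), ?_⟩
    rintro s ⟨w, hw, rfl⟩
    have := hlow w hw
    simpa using this
  refine ⟨sInf S, fun t ht => ?_⟩
  simp only [mem_Icc] at ht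
  rcases lt_trichotomy t 0 with hneg | rfl | hpos
  · have hlb : ∀ s ∈ S, (f 0 - f t) / (0 - t) ≤ s := by
      rintro s ⟨w, hw, rfl⟩
      have := hf.slope_mono_adjacent ⟨ht.1, by linarith [ht.2]⟩
        ⟨by linarith [hw.1], hw.2⟩ hneg hw.1
      simpa using this
    have hle : (f 0 - f t) / (0 - t) ≤ sInf S := le_csInf hne hlb
    have h2 : (f 0 - f t) / (-t) ≤ sInf S := by simpa using hle
    have h3 : f 0 - f t ≤ sInf S * (-t) := by
      rw [div_le_iff₀ (by linarith : (0:ℝ) < -t)] at h2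
      exact h2
    linarith
  · simp
  · have hmem : (f t - f 0) / t ∈ S := ⟨t, ⟨hpos, ht.2⟩, by simp⟩
    have hle : sInf S ≤ (f t - f 0) / t := csInf_le hbdd hmem
    have h3 : sInf S * t ≤ f t - f 0 := by
      rw [le_div_iff₀ hpos] at hle
      exact hle
    linarith


/-- The perturbation lemma used in the proof of Theorem 5 of Cai, Low and Xia (2013): for
a convex `f` on `[-1/2, 1/2]`, with `f_s t = (f t + f (−t))/2 − f 0`, and `0 < t* ≤ 1/2`,
there is a convex `g` on `[-1/2, 1/2]` with `g 0 − f 0 = f_s t*` and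
`∫_{-1/2}^{1/2} (g − f)² ≤ (9/4) f_s(t*)² t*`. -/
theorem convex_perturbation
    (f : ℝ → ℝ) (hf : ConvexOn ℝ (Set.Icc (-(1:ℝ)/2) (1/2)) f)
    (fs : ℝ → ℝ) (hfs : ∀ t : ℝ, fs t = (f t + f (-t))/2 - f 0)
    (tstar : ℝ) (ht0 : 0 < tstar) (ht1 : tstar ≤ 1/2) :
    ∃ g : ℝ → ℝ, ConvexOn ℝ (Set.Icc (-(1:ℝ)/2) (1/2)) g ∧
      g 0 - f 0 = fs tstar ∧
      (∫ t in (-(1:ℝ)/2)..(1/2), (g t - f t)^2) ≤ (9/4) * (fs tstar)^2 * tstar := by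
  obtain ⟨d0, hd⟩ := exists_subgrad f hf
  rcases le_or_gt 0 ((f tstar - f (-tstar))/2 - d0 * tstar) with hpos | hneg
  · obtain ⟨g, h1, h2, h3⟩ := aux_pert f hf tstar ht0 ht1 d0 hd hpos
    exact ⟨g, h1, by rw [hfs tstar]; exact h2, by rw [hfs tstar]; exact h3⟩
  · have hf' : ConvexOn ℝ (Set.Icc (-(1:ℝ)/2) (1/2)) (fun t => f (-t)) := convexOn_comp_neg hf
    have hd' : ∀ t ∈ Set.Icc (-(1:ℝ)/2) (1/2),
        (fun t => f (-t)) 0 + (-d0) * t ≤ (fun t => f (-t)) t := by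
      intro t ht
      simp only [Set.mem_Icc] at ht
      have htneg : -t ∈ Set.Icc (-(1:ℝ)/2) (1/2) := by
        simp only [Set.mem_Icc]
        constructor <;> linarith [ht.1, ht.2]
      have hdt := hd (-t) htneg
      simp only [neg_zero]
      have he : -d0 * t = d0 * (-t) := by ring
      rw [he]
      exact hdt
    have hnu' : 0 ≤ ((fun t => f (-t)) tstar - (fun t => f (-t)) (-tstar))/2 - (-d0) * tstar := by
      simp only [neg_neg]
      linarith [hneg]
    obtain ⟨g', hg1, hg2, hg3⟩ := aux_pert (fun t => f (-t)) hf' tstar ht0 ht1 (-d0) hd' hnu'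
    simp only [neg_zero, neg_neg] at hg2 hg3
    refine ⟨fun t => g' (-t), convexOn_comp_neg hg1, ?_, ?_⟩
    · rw [hfs tstar]
      simp only [neg_zero]
      linarith [hg2]
    · rw [hfs tstar]
      have hb : (-(1:ℝ)/2) = -((1:ℝ)/2) := by norm_num
      rw [hb]
      have hcomp := intervalIntegral.integral_comp_neg (a := -((1:ℝ)/2)) (b := (1:ℝ)/2)
        (f := fun u => (g' u - f (-u))^2)
      simp only [neg_neg] at hcomp
      have hgoal : (∫ t in (-((1:ℝ)/2))..(1/2), (g' (-t) - f t)^2)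
          = ∫ t in (-((1:ℝ)/2))..(1/2), (g' t - f (-t))^2 := hcomp
      rw [hgoal]
      have hre : (9:ℝ)/4*((f (-tstar) + f tstar)/2 - f 0)^2*tstar
          = 9/4*((f tstar + f (-tstar))/2 - f 0)^2*tstar := by ring
      have hg3' := hg3
      rw [hb] at hg3'
      linarith [hg3', hre]
end
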